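/- For every ε > 0 there exists a constant C > 0 such that for every real number X ≥ 2, Σ gcd(b,c) · τ(j)² · τ(d·lcm(b,c)/b)² · τ(d·lcm(b,c)/c)² / (j·d·b·c) ≤ C·X^ε, where the sum is over all quadruples (b,c,d,j) of positive integers satisfying j·lcm(b,c)·d ≤ √X. -/

import Mathlib

open Finset

/-- Divisor function is subpolynomial. -/
lemma tau_subpoly {δ : ℝ} (hδ : 0 < δ) :
    ∃ C : ℝ, 1 ≤ C ∧ ∀ n : ℕ, n ≠ 0 → (n.divisors.card : ℝ) ≤ C * (n : ℝ) ^ δ := by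
  have hlog2 : (0:ℝ) < Real.log 2 := Real.log_pos one_lt_two
  set M : ℝ := max 1 (1 / (δ * Real.log 2)) with hMdef
  have hM1 : (1:ℝ) ≤ M := le_max_left _ _
  have hMδ : 1 ≤ M * (δ * Real.log 2) := by
    rw [← div_le_iff₀ (by positivity)]
    exact le_max_right _ _
  set K : ℕ := ⌈(2:ℝ) ^ (1/δ)⌉₊ with hK
  refine ⟨M ^ (K + 1), one_le_pow₀ hM1, ?_⟩
  intro n hn
  rw [Nat.card_divisors hn]
  have hprodN : n = ∏ p ∈ n.primeFactors, p ^ (n.factorization p) := by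
    conv_lhs => rw [← Nat.factorization_prod_pow_eq_self hn]
    rw [Finsupp.prod, Nat.support_factorization]
  have hprod : (n:ℝ) = ∏ p ∈ n.primeFactors, (p:ℝ) ^ (n.factorization p) := by
    conv_lhs => rw [hprodN]
    push_cast
    rfl
  have hrpow : (n:ℝ) ^ δ
      = ∏ p ∈ n.primeFactors, ((p:ℝ) ^ (n.factorization p)) ^ δ := by
    rw [hprod, Real.finset_prod_rpow _ _ (fun p _ => by positivity) δ]
  -- per prime bound
  have hper : ∀ p ∈ n.primeFactors,
      ((n.factorization p + 1 : ℕ) : ℝ)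
        ≤ (if p ≤ K then M else 1) * ((p:ℝ) ^ (n.factorization p)) ^ δ := by
    intro p hp
    have hpp : p.Prime := Nat.prime_of_mem_primeFactors hp
    have hp2 : (2:ℝ) ≤ (p:ℝ) := by exact_mod_cast hpp.two_le
    set a : ℕ := n.factorization p with ha
    have hQ : ((p:ℝ) ^ a) ^ δ = (p:ℝ) ^ ((a:ℝ) * δ) := by
      rw [← Real.rpow_natCast (p:ℝ) a, ← Real.rpow_mul (by positivity)]
    have ha1 : ((a:ℝ) + 1) ≤ 2 ^ a := by
      exact_mod_cast Nat.lt_two_pow_self (n := a)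
    by_cases hpK : p ≤ K
    · simp only [hpK, if_true]
      rw [hQ]
      have h2 : (2:ℝ) ^ ((a:ℝ) * δ) ≤ (p:ℝ) ^ ((a:ℝ) * δ) :=
        Real.rpow_le_rpow (by norm_num) hp2 (by positivity)
      have h3 : 1 + (a:ℝ) * δ * Real.log 2 ≤ (2:ℝ) ^ ((a:ℝ) * δ) := by
        rw [Real.rpow_def_of_pos (by norm_num)]
        calc 1 + (a:ℝ) * δ * Real.log 2 = (Real.log 2 * ((a:ℝ)*δ)) + 1 := by ring
          _ ≤ Real.exp (Real.log 2 * ((a:ℝ)*δ)) := Real.add_one_le_exp _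
      push_cast
      have hanneg : (0:ℝ) ≤ (a:ℝ) := Nat.cast_nonneg a
      nlinarith [mul_le_mul_of_nonneg_left (h3.trans h2) (le_trans zero_le_one hM1)]
    · simp only [hpK, if_false, one_mul]
      push_cast
      rw [hQ]
      have hBp : (2:ℝ) ^ (1/δ) ≤ (p:ℝ) := by
        have : ((K:ℝ)) ≤ (p:ℝ) := by exact_mod_cast (Nat.not_le.mp hpK).le
        exact le_trans (Nat.le_ceil _) this
      have h2p : (2:ℝ) ≤ (p:ℝ) ^ δ := by
        have := Real.rpow_le_rpow (by positivity) hBp hδ.le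
        rwa [← Real.rpow_mul (by norm_num), one_div_mul_cancel hδ.ne', Real.rpow_one] at this
      calc ((a:ℝ) + 1) ≤ 2 ^ a := ha1
        _ ≤ ((p:ℝ) ^ δ) ^ a := pow_le_pow_left₀ (by norm_num) h2p a
        _ = (p:ℝ) ^ ((a:ℝ) * δ) := by
            rw [← Real.rpow_natCast ((p:ℝ)^δ) a, ← Real.rpow_mul (by positivity)]
            ring_nf
  calc ((∏ p ∈ n.primeFactors, (n.factorization p + 1) : ℕ) : ℝ)
      = ∏ p ∈ n.primeFactors, ((n.factorization p + 1 : ℕ) : ℝ) := by push_cast; rfl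
    _ ≤ ∏ p ∈ n.primeFactors,
          ((if p ≤ K then M else 1) * ((p:ℝ) ^ (n.factorization p)) ^ δ) :=
        Finset.prod_le_prod (fun p _ => by positivity) hper
    _ = (∏ p ∈ n.primeFactors, (if p ≤ K then M else 1)) * (n:ℝ) ^ δ := by
        rw [Finset.prod_mul_distrib, hrpow]
    _ ≤ M ^ (K + 1) * (n:ℝ) ^ δ := by
        refine mul_le_mul_of_nonneg_right ?_ (by positivity)
        calc (∏ p ∈ n.primeFactors, (if p ≤ K then M else 1))
            = ∏ p ∈ n.primeFactors.filter (· ≤ K), M := (Finset.prod_filter _ _).symm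
          _ = M ^ (n.primeFactors.filter (· ≤ K)).card := Finset.prod_const M
          _ ≤ M ^ (K + 1) := by
              refine pow_le_pow_right₀ hM1 ?_
              have hsub : n.primeFactors.filter (· ≤ K) ⊆ Finset.range (K+1) := by
                intro x hx
                simp only [Finset.mem_filter] at hx
                exact Finset.mem_range.mpr (Nat.lt_succ_of_le hx.2)
              simpa using Finset.card_le_card hsub

lemma div_filter_sum (N g : ℕ) (hg : 1 ≤ g) :
    ∑ b ∈ (Finset.Icc 1 N).filter (fun b => g ∣ b), ((b:ℝ))⁻¹
      ≤ (g:ℝ)⁻¹ * ∑ n ∈ Finset.Icc 1 N, ((n:ℝ))⁻¹ := by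
  have himg : (Finset.Icc 1 N).filter (fun b => g ∣ b)
      = (Finset.Icc 1 (N / g)).image (fun b' => g * b') := by
    ext b
    simp only [Finset.mem_filter, Finset.mem_Icc, Finset.mem_image]
    constructor
    · rintro ⟨⟨hb1, hbN⟩, k, rfl⟩
      refine ⟨k, ⟨by nlinarith, (Nat.le_div_iff_mul_le (by omega)).mpr (by nlinarith)⟩, rfl⟩
    · rintro ⟨k, ⟨hk1, hk2⟩, rfl⟩
      have := (Nat.le_div_iff_mul_le (show 0 < g by omega)).mp hk2
      exact ⟨⟨by nlinarith, by nlinarith⟩, ⟨k, rfl⟩⟩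
  rw [himg, Finset.sum_image (fun x _ y _ h => Nat.eq_of_mul_eq_mul_left (by omega) h)]
  calc ∑ k ∈ Finset.Icc 1 (N/g), ((g*k : ℕ):ℝ)⁻¹
      = ∑ k ∈ Finset.Icc 1 (N/g), (g:ℝ)⁻¹ * ((k:ℝ))⁻¹ := by
        refine Finset.sum_congr rfl fun k _ => ?_
        push_cast
        rw [mul_inv]
    _ = (g:ℝ)⁻¹ * ∑ k ∈ Finset.Icc 1 (N/g), ((k:ℝ))⁻¹ := by rw [Finset.mul_sum]
    _ ≤ _ := by
        refine mul_le_mul_of_nonneg_left ?_ (by positivity)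
        refine Finset.sum_le_sum_of_subset_of_nonneg ?_ (fun i _ _ => by positivity)
        exact Finset.Icc_subset_Icc_right (Nat.div_le_self N g)

lemma lcm_sum_le (N : ℕ) :
    ∑ b ∈ Finset.Icc 1 N, ∑ c ∈ Finset.Icc 1 N, ((Nat.lcm b c : ℕ):ℝ)⁻¹
      ≤ (∑ n ∈ Finset.Icc 1 N, ((n:ℝ))⁻¹) ^ 3 := by
  set A := Finset.Icc 1 N with hA
  set H : ℝ := ∑ n ∈ A, ((n:ℝ))⁻¹ with hH
  have hH0 : 0 ≤ H := Finset.sum_nonneg fun i _ => by positivity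
  have step1 : ∀ b ∈ A, ∀ c ∈ A, ((Nat.lcm b c : ℕ):ℝ)⁻¹
      ≤ ∑ g ∈ A, (g:ℝ) * (if g ∣ b then (b:ℝ)⁻¹ else 0) * (if g ∣ c then (c:ℝ)⁻¹ else 0) := by
    intro b hb c hc
    rw [hA, Finset.mem_Icc] at hb hc
    have hb0 : 0 < b := hb.1
    have hc0 : 0 < c := hc.1
    have hgmem : Nat.gcd b c ∈ A := by
      rw [hA, Finset.mem_Icc]
      exact ⟨Nat.gcd_pos_of_pos_left c hb0, le_trans (Nat.gcd_le_left c hb0) hb.2⟩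
    have hterm : ((Nat.lcm b c : ℕ):ℝ)⁻¹
        = (Nat.gcd b c : ℝ) * (if Nat.gcd b c ∣ b then (b:ℝ)⁻¹ else 0)
            * (if Nat.gcd b c ∣ c then (c:ℝ)⁻¹ else 0) := by
      rw [if_pos (Nat.gcd_dvd_left b c), if_pos (Nat.gcd_dvd_right b c)]
      have hgl : (Nat.gcd b c : ℝ) * (Nat.lcm b c : ℝ) = (b:ℝ) * c := by
        exact_mod_cast Nat.gcd_mul_lcm b c
      have hlcm0 : (0:ℝ) < (Nat.lcm b c : ℝ) := by
        have : 0 < Nat.lcm b c := Nat.pos_of_ne_zero (Nat.lcm_ne_zero (by omega) (by omega))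
        exact_mod_cast this
      field_simp
      linarith [hgl]
    rw [hterm]
    refine Finset.single_le_sum
      (f := fun (g : ℕ) => (g:ℝ) * (if g ∣ b then (b:ℝ)⁻¹ else 0) * (if g ∣ c then (c:ℝ)⁻¹ else 0))
      (fun g _ => ?_) hgmem
    split_ifs <;> positivity
  have hUle : ∀ g ∈ A, (∑ b ∈ A, if g ∣ b then (b:ℝ)⁻¹ else 0) ≤ (g:ℝ)⁻¹ * H := by
    intro g hg
    rw [hA, Finset.mem_Icc] at hg
    rw [← Finset.sum_filter]
    exact div_filter_sum N g hg.1
  have hU0 : ∀ g b : ℕ, (0:ℝ) ≤ (if g ∣ b then (b:ℝ)⁻¹ else 0) := by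
    intro g b; split_ifs <;> positivity
  calc ∑ b ∈ A, ∑ c ∈ A, ((Nat.lcm b c : ℕ):ℝ)⁻¹
      ≤ ∑ b ∈ A, ∑ c ∈ A, ∑ g ∈ A,
          (g:ℝ) * (if g ∣ b then (b:ℝ)⁻¹ else 0) * (if g ∣ c then (c:ℝ)⁻¹ else 0) :=
        Finset.sum_le_sum fun b hb => Finset.sum_le_sum fun c hc => step1 b hb c hc
    _ = ∑ b ∈ A, ∑ g ∈ A, ∑ c ∈ A,
          (g:ℝ) * (if g ∣ b then (b:ℝ)⁻¹ else 0) * (if g ∣ c then (c:ℝ)⁻¹ else 0) :=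
        Finset.sum_congr rfl fun b _ => Finset.sum_comm
    _ = ∑ g ∈ A, ∑ b ∈ A, ∑ c ∈ A,
          (g:ℝ) * (if g ∣ b then (b:ℝ)⁻¹ else 0) * (if g ∣ c then (c:ℝ)⁻¹ else 0) :=
        Finset.sum_comm
    _ = ∑ g ∈ A, (g:ℝ) * (∑ b ∈ A, if g ∣ b then (b:ℝ)⁻¹ else 0)
          * (∑ c ∈ A, if g ∣ c then (c:ℝ)⁻¹ else 0) := by
        refine Finset.sum_congr rfl fun g _ => ?_
        calc ∑ b ∈ A, ∑ c ∈ A,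
              (g:ℝ) * (if g ∣ b then (b:ℝ)⁻¹ else 0) * (if g ∣ c then (c:ℝ)⁻¹ else 0)
            = ∑ b ∈ A, ((g:ℝ) * (if g ∣ b then (b:ℝ)⁻¹ else 0))
                * (∑ c ∈ A, if g ∣ c then (c:ℝ)⁻¹ else 0) :=
              Finset.sum_congr rfl fun b _ => (Finset.mul_sum _ _ _).symm
          _ = (∑ b ∈ A, (g:ℝ) * (if g ∣ b then (b:ℝ)⁻¹ else 0))
                * (∑ c ∈ A, if g ∣ c then (c:ℝ)⁻¹ else 0) := (Finset.sum_mul _ _ _).symm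
          _ = (g:ℝ) * (∑ b ∈ A, if g ∣ b then (b:ℝ)⁻¹ else 0)
                * (∑ c ∈ A, if g ∣ c then (c:ℝ)⁻¹ else 0) := by rw [← Finset.mul_sum]
    _ ≤ ∑ g ∈ A, (g:ℝ)⁻¹ * H ^ 2 := by
        refine Finset.sum_le_sum fun g hg => ?_
        have hg1 : 1 ≤ g := by
          rw [hA, Finset.mem_Icc] at hg; exact hg.1
        have hgR : (0:ℝ) < (g:ℝ) := by exact_mod_cast hg1
        have h1 := hUle g hg
        have hbn : (0:ℝ) ≤ ∑ b ∈ A, if g ∣ b then (b:ℝ)⁻¹ else 0 :=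
          Finset.sum_nonneg fun b _ => hU0 g b
        calc (g:ℝ) * (∑ b ∈ A, if g ∣ b then (b:ℝ)⁻¹ else 0)
              * (∑ c ∈ A, if g ∣ c then (c:ℝ)⁻¹ else 0)
            ≤ (g:ℝ) * ((g:ℝ)⁻¹ * H) * ((g:ℝ)⁻¹ * H) := by
              have h2 : (g:ℝ) * (∑ b ∈ A, if g ∣ b then (b:ℝ)⁻¹ else 0)
                  ≤ (g:ℝ) * ((g:ℝ)⁻¹ * H) := mul_le_mul_of_nonneg_left h1 hgR.le
              exact mul_le_mul h2 h1 hbn (by positivity)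
          _ = (g:ℝ)⁻¹ * H ^ 2 := by field_simp
    _ = H * H ^ 2 := by rw [← Finset.sum_mul, ← hH]
    _ = H ^ 3 := by ring


set_option maxHeartbeats 1000000 in
/-- For every `ε > 0` there is `C > 0` so that for all real `X ≥ 2`,
`∑ gcd(b,c) τ(j)² τ(d[b,c]/b)² τ(d[b,c]/c)² / (j d b c) ≤ C X^ε`, the sum being
over quadruples `(b, c, d, j)` of positive integers with `j · lcm(b,c) · d ≤ √X`. -/
theorem divisor_weight_sum_bound :
    ∀ ε : ℝ, 0 < ε → ∃ C : ℝ, 0 < C ∧ ∀ X : ℝ, 2 ≤ X →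
      ∑ p ∈ (Finset.Icc 1 ⌊X⌋₊ ×ˢ Finset.Icc 1 ⌊X⌋₊ ×ˢ Finset.Icc 1 ⌊X⌋₊ ×ˢ
          Finset.Icc 1 ⌊X⌋₊).filter
          (fun p : ℕ × ℕ × ℕ × ℕ =>
            ((p.2.2.2 * Nat.lcm p.1 p.2.1 * p.2.2.1 : ℕ) : ℝ) ≤ Real.sqrt X),
        (Nat.gcd p.1 p.2.1 : ℝ) * (p.2.2.2.divisors.card : ℝ) ^ 2 *
          ((p.2.2.1 * Nat.lcm p.1 p.2.1 / p.1).divisors.card : ℝ) ^ 2 *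
          ((p.2.2.1 * Nat.lcm p.1 p.2.1 / p.2.1).divisors.card : ℝ) ^ 2 /
          ((p.2.2.2 : ℝ) * p.2.2.1 * p.1 * p.2.1) ≤ C * X ^ ε := by
  intro ε hε
  set δ : ℝ := ε / 23 with hδdef
  have hδ : 0 < δ := by positivity
  obtain ⟨C, hC1, hC⟩ := tau_subpoly hδ
  have hC0 : (0:ℝ) < C := lt_of_lt_of_le one_pos hC1
  refine ⟨C ^ 6 * (1 + 1/δ) ^ 5, by positivity, ?_⟩
  intro X hX2
  have hX1 : (1:ℝ) ≤ X := by linarith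
  have hX0 : (0:ℝ) < X := by linarith
  set N : ℕ := ⌊X⌋₊ with hN
  have hNX : (N:ℝ) ≤ X := Nat.floor_le hX0.le
  set A : Finset ℕ := Finset.Icc 1 N with hA
  set H : ℝ := ∑ n ∈ A, ((n:ℝ))⁻¹ with hH
  have hH0 : 0 ≤ H := Finset.sum_nonneg fun i _ => by positivity
  -- H ≤ (1 + 1/δ) X^δ
  have hXδ1 : (1:ℝ) ≤ X ^ δ := by
    rw [show (1:ℝ) = X ^ (0:ℝ) from (Real.rpow_zero X).symm]
    exact Real.rpow_le_rpow_of_exponent_le hX1 hδ.le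
  have hHlog : H ≤ (1 + 1/δ) * X ^ δ := by
    have h1 : H = ((harmonic N : ℚ) : ℝ) := by
      rw [harmonic_eq_sum_Icc]
      push_cast
      rfl
    have h2 : H ≤ 1 + Real.log N := h1 ▸ harmonic_le_one_add_log N
    have h3 : Real.log (N:ℝ) ≤ Real.log X := by
      rcases Nat.eq_zero_or_pos N with h | h
      · simp [h]
        exact Real.log_nonneg hX1
      · exact Real.log_le_log (by exact_mod_cast h) hNX
    have h4 : Real.log X ≤ X ^ δ / δ := by
      have h5 := Real.log_le_sub_one_of_pos (show (0:ℝ) < X ^ δ by positivity)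
      rw [Real.log_rpow hX0] at h5
      rw [le_div_iff₀ hδ]
      nlinarith
    have : (1 + 1/δ) * X ^ δ = X ^ δ + X ^ δ / δ := by
      field_simp
    rw [this]
    linarith
  -- uniform divisor-count bound
  have tb : ∀ n : ℕ, n ≠ 0 → (n:ℝ) ≤ X ^ (3:ℕ) →
      (n.divisors.card : ℝ) ≤ C * X ^ (3*δ) := by
    intro n hn hnX
    refine (hC n hn).trans ?_
    have h1 : (n:ℝ) ^ δ ≤ (X ^ (3:ℕ)) ^ δ :=
      Real.rpow_le_rpow (Nat.cast_nonneg n) hnX hδ.le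
    have h2 : ((X:ℝ) ^ (3:ℕ)) ^ δ = X ^ (3*δ) := by
      rw [← Real.rpow_natCast X 3, ← Real.rpow_mul hX0.le]
      norm_num
    exact mul_le_mul_of_nonneg_left (h2 ▸ h1) (by linarith)
  set t : ℝ := C * X ^ (3*δ) with ht
  have ht0 : 0 ≤ t := by positivity
  set K0 : ℝ := t ^ 6 with hK0
  have hK00 : 0 ≤ K0 := by positivity
  -- termwise bound
  have hterm : ∀ p ∈ A ×ˢ A ×ˢ A ×ˢ A,
      (Nat.gcd p.1 p.2.1 : ℝ) * (p.2.2.2.divisors.card : ℝ) ^ 2 *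
          ((p.2.2.1 * Nat.lcm p.1 p.2.1 / p.1).divisors.card : ℝ) ^ 2 *
          ((p.2.2.1 * Nat.lcm p.1 p.2.1 / p.2.1).divisors.card : ℝ) ^ 2 /
          ((p.2.2.2 : ℝ) * p.2.2.1 * p.1 * p.2.1)
        ≤ K0 * (((Nat.lcm p.1 p.2.1 : ℕ):ℝ)⁻¹ * (p.2.2.1:ℝ)⁻¹ * (p.2.2.2:ℝ)⁻¹) := by
    rintro ⟨b, c, d, j⟩ hp
    simp only [Finset.mem_product, hA, Finset.mem_Icc] at hp
    obtain ⟨⟨hb1, hbN⟩, ⟨hc1, hcN⟩, ⟨hd1, hdN⟩, ⟨hj1, hjN⟩⟩ := hp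
    simp only []
    set L : ℕ := Nat.lcm b c with hL
    have hL0 : 0 < L := Nat.pos_of_ne_zero (Nat.lcm_ne_zero (by omega) (by omega))
    have hLbc : L ≤ b * c := Nat.le_of_dvd (by positivity)
      (Nat.lcm_dvd (dvd_mul_right b c) (dvd_mul_left c b))
    have hXX3 : (X:ℝ) ≤ X ^ (3:ℕ) := by
      calc X = X ^ (1:ℕ) := (pow_one X).symm
        _ ≤ X ^ (3:ℕ) := pow_le_pow_right₀ hX1 (by norm_num)
    have hcastN3 : ∀ m : ℕ, m ≤ N * (N * N) → (m:ℝ) ≤ X ^ (3:ℕ) := by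
      intro m hm
      have : (m:ℝ) ≤ (N:ℝ) * ((N:ℝ) * (N:ℝ)) := by exact_mod_cast hm
      have hN0 : (0:ℝ) ≤ (N:ℝ) := Nat.cast_nonneg N
      calc (m:ℝ) ≤ (N:ℝ) * ((N:ℝ) * (N:ℝ)) := this
        _ ≤ X * (X * X) := by gcongr
        _ = X ^ (3:ℕ) := by ring
    -- the three divisor-count bounds
    have hjb : ((j).divisors.card : ℝ) ≤ t := by
      refine tb j (by omega) ?_
      calc (j:ℝ) ≤ (N:ℝ) := by exact_mod_cast hjN
        _ ≤ X := hNX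
        _ ≤ X ^ (3:ℕ) := hXX3
    have hdL1 : b ≤ d * L := le_trans (Nat.le_of_dvd hL0 (Nat.dvd_lcm_left b c))
      (Nat.le_mul_of_pos_left L (by omega))
    have hdL2 : c ≤ d * L := le_trans (Nat.le_of_dvd hL0 (Nat.dvd_lcm_right b c))
      (Nat.le_mul_of_pos_left L (by omega))
    have hdLN : d * L ≤ N * (N * N) := by
      calc d * L ≤ N * (b * c) := Nat.mul_le_mul (by omega) hLbc
        _ ≤ N * (N * N) := by
            refine Nat.mul_le_mul_left N (Nat.mul_le_mul hbN hcN)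
    have h1b : ((d * L / b).divisors.card : ℝ) ≤ t := by
      refine tb _ ?_ ?_
      · have : 1 ≤ d * L / b := (Nat.one_le_div_iff (by omega)).mpr hdL1
        omega
      · exact hcastN3 _ (le_trans (Nat.div_le_self _ _) hdLN)
    have h2b : ((d * L / c).divisors.card : ℝ) ≤ t := by
      refine tb _ ?_ ?_
      · have : 1 ≤ d * L / c := (Nat.one_le_div_iff (by omega)).mpr hdL2
        omega
      · exact hcastN3 _ (le_trans (Nat.div_le_self _ _) hdLN)
    -- rewrite the term
    have hLR : (0:ℝ) < (L:ℝ) := by exact_mod_cast hL0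
    have hgl : (Nat.gcd b c : ℝ) = (b:ℝ) * c / (L:ℝ) := by
      rw [eq_div_iff hLR.ne']
      exact_mod_cast Nat.gcd_mul_lcm b c
    have hbR : (0:ℝ) < (b:ℝ) := by exact_mod_cast hb1
    have hcR : (0:ℝ) < (c:ℝ) := by exact_mod_cast hc1
    have hdR : (0:ℝ) < (d:ℝ) := by exact_mod_cast hd1
    have hjR : (0:ℝ) < (j:ℝ) := by exact_mod_cast hj1
    set τj : ℝ := ((j).divisors.card : ℝ) with hτj
    set τ1 : ℝ := ((d * L / b).divisors.card : ℝ) with hτ1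
    set τ2 : ℝ := ((d * L / c).divisors.card : ℝ) with hτ2
    have hτj0 : 0 ≤ τj := Nat.cast_nonneg _
    have hτ10 : 0 ≤ τ1 := Nat.cast_nonneg _
    have hτ20 : 0 ≤ τ2 := Nat.cast_nonneg _
    have heq : (Nat.gcd b c : ℝ) * τj ^ 2 * τ1 ^ 2 * τ2 ^ 2 /
        ((j:ℝ) * d * b * c)
        = (τj * τ1 * τ2) ^ 2 * (((L:ℕ):ℝ)⁻¹ * (d:ℝ)⁻¹ * (j:ℝ)⁻¹) := by
      rw [hgl]
      field_simp
    rw [heq]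
    refine mul_le_mul_of_nonneg_right ?_ (by positivity)
    calc (τj * τ1 * τ2) ^ 2 ≤ (t * t * t) ^ 2 := by
          refine pow_le_pow_left₀ (by positivity) ?_ 2
          exact mul_le_mul (mul_le_mul hjb h1b hτ10 ht0) h2b hτ20 (by positivity)
      _ = K0 := by rw [hK0]; ring
  -- sum of the bounding function factors
  have hsum : ∑ p ∈ A ×ˢ A ×ˢ A ×ˢ A,
      K0 * (((Nat.lcm p.1 p.2.1 : ℕ):ℝ)⁻¹ * (p.2.2.1:ℝ)⁻¹ * (p.2.2.2:ℝ)⁻¹)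
      = K0 * ((∑ b ∈ A, ∑ c ∈ A, ((Nat.lcm b c : ℕ):ℝ)⁻¹) * (H * H)) := by
    rw [← Finset.mul_sum]
    congr 1
    calc ∑ p ∈ A ×ˢ A ×ˢ A ×ˢ A,
          ((Nat.lcm p.1 p.2.1 : ℕ):ℝ)⁻¹ * (p.2.2.1:ℝ)⁻¹ * (p.2.2.2:ℝ)⁻¹
        = ∑ b ∈ A, ∑ c ∈ A, ∑ d ∈ A, ∑ j ∈ A,
            ((Nat.lcm b c : ℕ):ℝ)⁻¹ * (d:ℝ)⁻¹ * (j:ℝ)⁻¹ := by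
          rw [Finset.sum_product]
          refine Finset.sum_congr rfl fun b _ => ?_
          rw [Finset.sum_product]
          refine Finset.sum_congr rfl fun c _ => ?_
          rw [Finset.sum_product]
      _ = ∑ b ∈ A, ∑ c ∈ A, ((Nat.lcm b c : ℕ):ℝ)⁻¹ * (H * H) := by
          refine Finset.sum_congr rfl fun b _ => Finset.sum_congr rfl fun c _ => ?_
          calc ∑ d ∈ A, ∑ j ∈ A, ((Nat.lcm b c : ℕ):ℝ)⁻¹ * (d:ℝ)⁻¹ * (j:ℝ)⁻¹
              = ∑ d ∈ A, (((Nat.lcm b c : ℕ):ℝ)⁻¹ * (d:ℝ)⁻¹) * H :=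
                Finset.sum_congr rfl fun d _ => (Finset.mul_sum _ _ _).symm
            _ = (∑ d ∈ A, ((Nat.lcm b c : ℕ):ℝ)⁻¹ * (d:ℝ)⁻¹) * H :=
                (Finset.sum_mul _ _ _).symm
            _ = (((Nat.lcm b c : ℕ):ℝ)⁻¹ * H) * H := by rw [← Finset.mul_sum]
            _ = ((Nat.lcm b c : ℕ):ℝ)⁻¹ * (H * H) := by ring
      _ = (∑ b ∈ A, ∑ c ∈ A, ((Nat.lcm b c : ℕ):ℝ)⁻¹) * (H * H) :=
          ((Finset.sum_mul _ _ _).trans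
            (Finset.sum_congr rfl fun b _ => Finset.sum_mul _ _ _)).symm
  -- final exponent bookkeeping
  have hfin : K0 * (((1 + 1/δ) * X ^ δ) ^ 5) = C ^ 6 * (1 + 1/δ) ^ 5 * X ^ ε := by
    have hXe : (X ^ (3*δ)) ^ (6:ℕ) * (X ^ δ) ^ (5:ℕ) = X ^ ε := by
      rw [← Real.rpow_natCast (X ^ (3*δ)) 6, ← Real.rpow_natCast (X ^ δ) 5,
        ← Real.rpow_mul hX0.le, ← Real.rpow_mul hX0.le, ← Real.rpow_add hX0]
      congr 1
      push_cast
      rw [hδdef]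
      ring
    calc K0 * (((1 + 1/δ) * X ^ δ) ^ 5)
        = C ^ 6 * (1 + 1/δ) ^ 5 * ((X ^ (3*δ)) ^ (6:ℕ) * (X ^ δ) ^ (5:ℕ)) := by
          rw [hK0, ht]; ring
      _ = C ^ 6 * (1 + 1/δ) ^ 5 * X ^ ε := by rw [hXe]
  -- put everything together
  calc ∑ p ∈ (A ×ˢ A ×ˢ A ×ˢ A).filter
          (fun p : ℕ × ℕ × ℕ × ℕ =>
            ((p.2.2.2 * Nat.lcm p.1 p.2.1 * p.2.2.1 : ℕ) : ℝ) ≤ Real.sqrt X),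
        (Nat.gcd p.1 p.2.1 : ℝ) * (p.2.2.2.divisors.card : ℝ) ^ 2 *
          ((p.2.2.1 * Nat.lcm p.1 p.2.1 / p.1).divisors.card : ℝ) ^ 2 *
          ((p.2.2.1 * Nat.lcm p.1 p.2.1 / p.2.1).divisors.card : ℝ) ^ 2 /
          ((p.2.2.2 : ℝ) * p.2.2.1 * p.1 * p.2.1)
      ≤ ∑ p ∈ A ×ˢ A ×ˢ A ×ˢ A,
        (Nat.gcd p.1 p.2.1 : ℝ) * (p.2.2.2.divisors.card : ℝ) ^ 2 *
          ((p.2.2.1 * Nat.lcm p.1 p.2.1 / p.1).divisors.card : ℝ) ^ 2 *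
          ((p.2.2.1 * Nat.lcm p.1 p.2.1 / p.2.1).divisors.card : ℝ) ^ 2 /
          ((p.2.2.2 : ℝ) * p.2.2.1 * p.1 * p.2.1) :=
        Finset.sum_le_sum_of_subset_of_nonneg (Finset.filter_subset _ _)
          (fun p _ _ => by positivity)
    _ ≤ ∑ p ∈ A ×ˢ A ×ˢ A ×ˢ A,
        K0 * (((Nat.lcm p.1 p.2.1 : ℕ):ℝ)⁻¹ * (p.2.2.1:ℝ)⁻¹ * (p.2.2.2:ℝ)⁻¹) :=
        Finset.sum_le_sum hterm
    _ = K0 * ((∑ b ∈ A, ∑ c ∈ A, ((Nat.lcm b c : ℕ):ℝ)⁻¹) * (H * H)) := hsum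
    _ ≤ K0 * (H ^ 3 * (H * H)) := by
        refine mul_le_mul_of_nonneg_left ?_ hK00
        exact mul_le_mul_of_nonneg_right (lcm_sum_le N) (by positivity)
    _ = K0 * H ^ 5 := by ring
    _ ≤ K0 * (((1 + 1/δ) * X ^ δ) ^ 5) := by
        refine mul_le_mul_of_nonneg_left ?_ hK00
        exact pow_le_pow_left₀ hH0 hHlog 5
    _ = C ^ 6 * (1 + 1/δ) ^ 5 * X ^ ε := hfin
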